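/- Let m, m', s, n be integers with 1 ≤ m < m' < s < n, and let p > 0 be a real number. Define c = (s−1)^{p+1}/s^{p+1} and the sequence {a_i}_{i=m}^{n−1} by a_i = 1/i^{p+1} for m ≤ i ≤ s, and a_i = c^{i−s}/s^{p+1} for s ≤ i ≤ n−1. Then (Σ_{i=m'}^{n−1} a_i) / (Σ_{i=m}^{m'−1} a_i) ≤ [ 1 − (m'/s)^p + p/m' − (m'/s)^p·(p/s) + (m'/s)^p·(p/s)·(1 − c^{n−s})/(1 − c) ] / ( (m'/m)^p − 1 ). -/

import Mathlib

open Finset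

lemma auxAnti (p : ℝ) (hp : 0 < p) {a b : ℝ} (ha : 0 < a) :
    AntitoneOn (fun x : ℝ => x ^ (-(p+1))) (Set.Icc a b) := by
  intro x hx y hy hxy
  have hx0 : 0 < x := lt_of_lt_of_le ha hx.1
  simp only
  rw [Real.rpow_neg hx0.le, Real.rpow_neg (hx0.trans_le hxy).le]
  exact inv_anti₀ (Real.rpow_pos_of_pos hx0 _)
    (Real.rpow_le_rpow hx0.le hxy (by linarith))

lemma auxInt (p : ℝ) (hp : 0 < p) {a b : ℝ} (ha : 0 < a) (hb : 0 < b) :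
    ∫ x in a..b, x ^ (-(p+1)) = (a ^ (-p) - b ^ (-p)) / p := by
  rw [integral_rpow (Or.inr ⟨by intro h; nlinarith, Set.notMem_uIcc_of_lt ha hb⟩)]
  have h1 : -(p+1) + 1 = -p := by ring
  rw [h1, div_neg, ← neg_div, neg_sub]

theorem stmt14 (m m' s n : ℕ) (hm : 1 ≤ m) (hmm' : m < m') (hm's : m' < s) (hsn : s < n)
    (p : ℝ) (hp : 0 < p)
    (c : ℝ) (hc : c = ((s : ℝ) - 1) ^ (p + 1) / (s : ℝ) ^ (p + 1))
    (a : ℕ → ℝ)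
    (ha : ∀ i, m ≤ i → i ≤ n - 1 →
      a i = if i ≤ s then 1 / (i : ℝ) ^ (p + 1) else c ^ (i - s) / (s : ℝ) ^ (p + 1)) :
    (∑ i ∈ Finset.Ico m' n, a i) / (∑ i ∈ Finset.Ico m m', a i)
      ≤ (1 - ((m' : ℝ) / (s : ℝ)) ^ p + p / (m' : ℝ)
          - ((m' : ℝ) / (s : ℝ)) ^ p * (p / (s : ℝ))
          + ((m' : ℝ) / (s : ℝ)) ^ p * (p / (s : ℝ)) * ((1 - c ^ (n - s)) / (1 - c)))
        / (((m' : ℝ) / (m : ℝ)) ^ p - 1) := by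
  set f : ℝ → ℝ := fun x => x ^ (-(p+1)) with hfdef
  have hm0 : (0:ℝ) < m := by exact_mod_cast hm
  have hm'0 : (0:ℝ) < m' := by
    have : (0:ℕ) < m' := by omega
    exact_mod_cast this
  have hs0 : (0:ℝ) < s := by
    have : (0:ℕ) < s := by omega
    exact_mod_cast this
  have hmm'R : (m:ℝ) < m' := by exact_mod_cast hmm'
  have hm'sR : (m':ℝ) < s := by exact_mod_cast hm's
  have hs1 : (1:ℝ) ≤ (s:ℝ) - 1 := by
    have : (2:ℕ) ≤ s := by omega
    have : (2:ℝ) ≤ s := by exact_mod_cast this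
    linarith
  -- c facts
  have hc0 : 0 ≤ c := by
    rw [hc]; positivity
  have hc1 : c < 1 := by
    rw [hc, div_lt_one (Real.rpow_pos_of_pos hs0 _)]
    exact Real.rpow_lt_rpow (by linarith) (by linarith) (by linarith)
  have hcne : c ≠ 1 := ne_of_lt hc1
  -- geometric sum
  set S : ℝ := (1 - c ^ (n - s)) / (1 - c) with hSdef
  have hS : ∑ j ∈ Finset.range (n - s), c ^ j = S := by
    rw [geom_sum_eq hcne, hSdef, ← neg_sub (1:ℝ) (c ^ (n-s)), ← neg_sub (1:ℝ) c,
      neg_div_neg_eq]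
  -- rewrite a on the pieces
  have haf : ∀ i ∈ Finset.Ico m s, a i = f i := by
    intro i hi
    rw [Finset.mem_Ico] at hi
    rw [ha i hi.1 (by omega), if_pos (by omega), hfdef]
    have hi0 : (0:ℝ) < i := by
      have : 0 < i := by omega
      exact_mod_cast this
    simp only
    rw [Real.rpow_neg hi0.le, one_div]
  have hag : ∀ i ∈ Finset.Ico s n, a i = c ^ (i - s) / (s:ℝ) ^ (p+1) := by
    intro i hi
    rw [Finset.mem_Ico] at hi
    rw [ha i (by omega) (by omega)]
    by_cases h : i ≤ s
    · have : i = s := by omega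
      subst this
      rw [if_pos le_rfl, Nat.sub_self, pow_zero]
    · rw [if_neg h]
  -- denominator
  have hDsum : ∑ i ∈ Finset.Ico m m', a i = ∑ i ∈ Finset.Ico m m', f i := by
    apply Finset.sum_congr rfl
    intro i hi
    apply haf
    rw [Finset.mem_Ico] at hi ⊢
    omega
  set L : ℝ := ((m:ℝ) ^ (-p) - (m':ℝ) ^ (-p)) / p with hLdef
  have hLle : L ≤ ∑ i ∈ Finset.Ico m m', a i := by
    rw [hDsum, hLdef, ← auxInt p hp hm0 hm'0]
    exact AntitoneOn.integral_le_sum_Ico (le_of_lt hmm') (auxAnti p hp hm0)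
  have hLpos : 0 < L := by
    rw [hLdef]
    apply div_pos _ hp
    have : (m':ℝ) ^ (-p) < (m:ℝ) ^ (-p) :=
      Real.rpow_lt_rpow_of_neg hm0 hmm'R (by linarith)
    linarith
  -- numerator split
  have hsplit : ∑ i ∈ Finset.Ico m' n, a i
      = (∑ i ∈ Finset.Ico m' s, f i) + S * (s:ℝ) ^ (-(p+1)) := by
    rw [← Finset.sum_Ico_consecutive a (le_of_lt hm's) (le_of_lt hsn)]
    congr 1
    · exact Finset.sum_congr rfl fun i hi => haf i (by
        rw [Finset.mem_Ico] at hi ⊢; omega)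
    · rw [Finset.sum_congr rfl hag, Finset.sum_Ico_eq_sum_range]
      have : ∀ j ∈ Finset.range (n - s), c ^ (s + j - s) / (s:ℝ) ^ (p+1)
          = c ^ j / (s:ℝ) ^ (p+1) := by
        intro j _; congr 2; omega
      rw [Finset.sum_congr rfl this, ← Finset.sum_div, hS,
        Real.rpow_neg hs0.le, div_eq_mul_inv]
  -- numerator middle bound
  have hmid : ∑ i ∈ Finset.Ico m' s, f i
      ≤ ((m':ℝ) ^ (-p) - (s:ℝ) ^ (-p)) / p + f m' - f s := by
    have h1 : (∑ i ∈ Finset.Ico m' s, f ((i:ℕ) + 1 : ℕ)) ≤ ∫ x in (m':ℝ)..(s:ℝ), f x :=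
      AntitoneOn.sum_le_integral_Ico (le_of_lt hm's) (auxAnti p hp hm'0)
    rw [hfdef] at h1
    rw [auxInt p hp hm'0 hs0] at h1
    have h2 : (∑ i ∈ Finset.Ico m' s, f ((i:ℕ) + 1 : ℕ))
        = (∑ i ∈ Finset.Ico m' s, f i) - f m' + f s := by
      have e1 : (∑ i ∈ Finset.Ico m' s, (fun j : ℕ => f j) (i + 1))
          = ∑ i ∈ Finset.Ico (m' + 1) (s + 1), (fun j : ℕ => f j) i :=
        Finset.sum_Ico_add' (fun j : ℕ => f j) m' s 1
      have e2 : (∑ i ∈ Finset.Ico (m' + 1) (s + 1), (fun j : ℕ => f j) i)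
          = (∑ i ∈ Finset.Ico (m' + 1) s, (fun j : ℕ => f j) i) + f s :=
        Finset.sum_Ico_succ_top (by omega) _
      have e3 : (∑ i ∈ Finset.Ico m' s, (fun j : ℕ => f j) i)
          = f m' + ∑ i ∈ Finset.Ico (m' + 1) s, (fun j : ℕ => f j) i :=
        Finset.sum_eq_sum_Ico_succ_bot hm's _
      simp only at e1 e2 e3 ⊢
      rw [e1, e2]
      linarith
    rw [h2] at h1
    linarith
  -- positivity of numerator sum
  have hNnn : 0 ≤ ∑ i ∈ Finset.Ico m' n, a i := by
    rw [hsplit]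
    have t1 : 0 ≤ ∑ i ∈ Finset.Ico m' s, f i := by
      apply Finset.sum_nonneg
      intro i _
      exact Real.rpow_nonneg (Nat.cast_nonneg i) _
    have t2 : 0 ≤ S := by
      rw [← hS]
      apply Finset.sum_nonneg
      intro j _
      positivity
    have t3 : 0 ≤ (s:ℝ) ^ (-(p+1)) := Real.rpow_nonneg hs0.le _
    nlinarith
  set U : ℝ := ((m':ℝ) ^ (-p) - (s:ℝ) ^ (-p)) / p + (m':ℝ) ^ (-(p+1))
      - (s:ℝ) ^ (-(p+1)) + S * (s:ℝ) ^ (-(p+1)) with hUdef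
  have hNU : ∑ i ∈ Finset.Ico m' n, a i ≤ U := by
    rw [hsplit, hUdef]
    have : f m' = (m':ℝ) ^ (-(p+1)) := rfl
    have h2 : f s = (s:ℝ) ^ (-(p+1)) := rfl
    rw [this, h2] at hmid
    linarith
  have hU0 : 0 ≤ U := le_trans hNnn hNU
  have step : (∑ i ∈ Finset.Ico m' n, a i) / (∑ i ∈ Finset.Ico m m', a i) ≤ U / L :=
    div_le_div₀ hU0 hNU hLpos hLle
  refine le_trans step (le_of_eq ?_)
  -- algebra: U / L = N / D
  have hEpos : (0:ℝ) < (m':ℝ) ^ p := Real.rpow_pos_of_pos hm'0 _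
  have f1 : ((m':ℝ)/(s:ℝ)) ^ p = (m':ℝ) ^ p * (s:ℝ) ^ (-p) := by
    rw [Real.div_rpow hm'0.le hs0.le, Real.rpow_neg hs0.le, div_eq_mul_inv]
  have f2 : ((m':ℝ)/(m:ℝ)) ^ p = (m':ℝ) ^ p * (m:ℝ) ^ (-p) := by
    rw [Real.div_rpow hm'0.le hm0.le, Real.rpow_neg hm0.le, div_eq_mul_inv]
  have f3 : (m':ℝ) ^ p * (m':ℝ) ^ (-p) = 1 := by
    rw [← Real.rpow_add hm'0, add_neg_cancel, Real.rpow_zero]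
  have f4 : (m':ℝ) ^ p * (m':ℝ) ^ (-(p+1)) = ((m':ℝ))⁻¹ := by
    rw [← Real.rpow_add hm'0]
    have : p + -(p+1) = -1 := by ring
    rw [this, Real.rpow_neg_one]
  have f5 : (s:ℝ) ^ (-(p+1)) = (s:ℝ) ^ (-p) * ((s:ℝ))⁻¹ := by
    rw [← Real.rpow_neg_one (s:ℝ), ← Real.rpow_add hs0]
    ring_nf
  have hN : 1 - ((m':ℝ)/(s:ℝ)) ^ p + p / (m':ℝ) - ((m':ℝ)/(s:ℝ)) ^ p * (p/(s:ℝ))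
      + ((m':ℝ)/(s:ℝ)) ^ p * (p/(s:ℝ)) * S = (p * (m':ℝ) ^ p) * U := by
    rw [f1, hUdef, f5]
    have f4' : (m':ℝ) ^ p * (m':ℝ) ^ (-(p+1)) * (m':ℝ) = 1 := by
      rw [f4]; field_simp
    generalize (m':ℝ) ^ p = E at f3 f4' ⊢
    generalize (m':ℝ) ^ (-p) = B at f3 ⊢
    generalize (m':ℝ) ^ (-(p+1)) = B1 at f4' ⊢
    generalize (s:ℝ) ^ (-p) = C
    field_simp
    linear_combination (-((m':ℝ) * (s:ℝ))) * f3 - (p * (s:ℝ)) * f4'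
  have hD : ((m':ℝ)/(m:ℝ)) ^ p - 1 = (p * (m':ℝ) ^ p) * L := by
    rw [f2, hLdef]
    generalize (m':ℝ) ^ p = E at f3 ⊢
    generalize (m':ℝ) ^ (-p) = B at f3 ⊢
    generalize (m:ℝ) ^ (-p) = A
    field_simp
    linear_combination f3
  rw [hN, hD, mul_div_mul_left _ _ (by positivity : (p * (m':ℝ) ^ p) ≠ 0)]
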